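/- Let B be a sober topological space (T0 and quasi-sober) and let F be a faded cosheaf of sets over B with structure maps R^W_V : F(W) → F(V). Then for every open V ⊆ B there exists a unique map s_V : F(V) → V such that for every open W ⊆ V and every x ∈ F(V): s_V(x) ∈ W if and only if x ∈ Im(R^W_V). -/

import Mathlib

open TopologicalSpace

/-- A cosheaf of sets over a topological space `B`: a set `obj V` for each open
`V ⊆ B` with inclusion maps `map : obj W → obj V` for opens `W ≤ V`, functorial
(`R^V_V = id` and `R^U_V ∘ R^W_U = R^W_V`), and satisfying the cosheaf gluing
condition: for every open `V`, family `𝒲` of opens with `⋃𝒲 = V`, set `M` and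
compatible family of maps `φ_W : obj W → M` (`W ∈ 𝒲`), there is a unique
`ψ : obj V → M` with `φ_W = ψ ∘ R^W_V` for all `W ∈ 𝒲`. -/
structure SetCosheaf (B : Type) [TopologicalSpace B] where
  obj : Opens B → Type
  map : ∀ {W V : Opens B}, W ≤ V → obj W → obj V
  map_id : ∀ (V : Opens B) (x : obj V), map (le_refl V) x = x
  map_comp : ∀ {W U V : Opens B} (h1 : W ≤ U) (h2 : U ≤ V) (x : obj W),
      map h2 (map h1 x) = map (h1.trans h2) x
  glue : ∀ (V : Opens B) (𝒲 : Set (Opens B)) (hV : sSup 𝒲 = V)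
      (M : Type) (φ : ∀ W ∈ 𝒲, obj W → M),
      (∀ U (hU : U ∈ 𝒲) (W) (hW : W ∈ 𝒲) (x : obj (U ⊓ W)),
        φ U hU (map inf_le_left x) = φ W hW (map inf_le_right x)) →
      ∃! ψ : obj V → M, ∀ W (hW : W ∈ 𝒲) (x : obj W),
        φ W hW x = ψ (map (le_of_le_of_eq (le_sSup hW) hV) x)

/-- A faded cosheaf of sets: a cosheaf of sets all of whose inclusion maps are
injective. -/
structure FadedSetCosheaf (B : Type) [TopologicalSpace B] extends SetCosheaf B where
  inj : ∀ {W V : Opens B} (h : W ≤ V), Function.Injective (map h)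

namespace FadedSetCosheaf

variable {B : Type} [TopologicalSpace B]

theorem range_mono (F : FadedSetCosheaf B) {W W' V : Opens B} (h : W ≤ W')
    (h1 : W ≤ V) (h2 : W' ≤ V) :
    Set.range (F.map h1) ⊆ Set.range (F.map h2) := by
  rintro x ⟨c, rfl⟩
  exact ⟨F.map h c, by rw [F.map_comp]⟩

theorem exists_mem_range_of_cover (F : FadedSetCosheaf B) {V : Opens B}
    {𝒲 : Set (Opens B)} (hV : sSup 𝒲 = V) (x : F.obj V) :
    ∃ W ∈ 𝒲, ∃ h : W ≤ V, x ∈ Set.range (F.map h) := by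
  obtain ⟨ψ, hψ, huniq⟩ := F.glue V 𝒲 hV Prop (fun _ _ _ => True) (fun _ _ _ _ _ => rfl)
  have h1 : (fun a => ∃ W ∈ 𝒲, ∃ h : W ≤ V, a ∈ Set.range (F.map h)) = ψ := by
    apply huniq
    intro W hW y
    exact (eq_true ⟨W, hW, le_of_le_of_eq (le_sSup hW) hV, ⟨y, rfl⟩⟩).symm
  have h2 : (fun _ : F.obj V => True) = ψ := by
    apply huniq
    intro W hW y
    rfl
  have := congrFun (h1.trans h2.symm) x
  simp only [eq_iff_iff, iff_true] at this
  exact this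

def pushRel (F : FadedSetCosheaf B) (W₁ W₂ : Opens B) :
    F.obj W₁ ⊕ F.obj W₂ → F.obj W₁ ⊕ F.obj W₂ → Prop := fun s t =>
  ∃ c : F.obj (W₁ ⊓ W₂),
    (s = .inl (F.map inf_le_left c) ∨ s = .inr (F.map inf_le_right c)) ∧
    (t = .inl (F.map inf_le_left c) ∨ t = .inr (F.map inf_le_right c))

open Classical in
noncomputable def pushMap (F : FadedSetCosheaf B) (W₁ W₂ : Opens B) :
    ∀ W ∈ ({W₁, W₂} : Set (Opens B)), F.obj W → Quot (pushRel F W₁ W₂) :=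
  fun W hW z =>
    if h : W = W₁ then Quot.mk _ (.inl (F.map h.le z))
    else Quot.mk _
      (.inr (F.map (Set.mem_singleton_iff.mp ((Set.mem_insert_iff.mp hW).resolve_left h)).le z))

theorem pushMap_compat (F : FadedSetCosheaf B) (W₁ W₂ : Opens B) :
    ∀ U (hU : U ∈ ({W₁, W₂} : Set (Opens B))) W (hW : W ∈ ({W₁, W₂} : Set (Opens B)))
      (z : F.obj (U ⊓ W)),
      pushMap F W₁ W₂ U hU (F.map inf_le_left z)
        = pushMap F W₁ W₂ W hW (F.map inf_le_right z) := by
  intro U hU W hW z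
  have hU' : U = W₁ ∨ U = W₂ := by simpa using hU
  have hW' : W = W₁ ∨ W = W₂ := by simpa using hW
  rcases hU' with rfl | rfl <;> rcases hW' with rfl | rfl
  · rfl
  · by_cases h : W = U
    · subst h; rfl
    · unfold pushMap
      rw [dif_pos rfl, dif_neg h]
      apply Quot.sound
      exact ⟨z, Or.inl (by rw [F.map_comp]), Or.inr (by rw [F.map_comp])⟩
  · by_cases h : U = W
    · subst h; rfl
    · unfold pushMap
      rw [dif_neg h, dif_pos rfl]
      apply Quot.sound
      refine ⟨F.map (le_inf inf_le_right inf_le_left) z, Or.inr ?_, Or.inl ?_⟩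
      · rw [F.map_comp, F.map_comp]
      · rw [F.map_comp, F.map_comp]
  · rfl

def pushPred (F : FadedSetCosheaf B) (W₁ W₂ : Opens B) : F.obj W₁ ⊕ F.obj W₂ → Prop
  | .inl _ => True
  | .inr b => ∃ c : F.obj (W₁ ⊓ W₂), F.map inf_le_right c = b

theorem pushPred_resp (F : FadedSetCosheaf B) (W₁ W₂ : Opens B) :
    ∀ s t, pushRel F W₁ W₂ s t → pushPred F W₁ W₂ s = pushPred F W₁ W₂ t := by
  rintro s t ⟨c, hs, ht⟩
  have key : ∀ u, (u = Sum.inl (F.map inf_le_left c) ∨ u = Sum.inr (F.map inf_le_right c)) →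
      pushPred F W₁ W₂ u := by
    rintro u (rfl | rfl)
    · trivial
    · exact ⟨c, rfl⟩
  exact propext (iff_of_true (key s hs) (key t ht))

theorem mem_range_inf (F : FadedSetCosheaf B) {V W₁ W₂ : Opens B} (h₁ : W₁ ≤ V) (h₂ : W₂ ≤ V)
    {x : F.obj V} (hx₁ : x ∈ Set.range (F.map h₁)) (hx₂ : x ∈ Set.range (F.map h₂))
    (h₁₂ : W₁ ⊓ W₂ ≤ V) :
    x ∈ Set.range (F.map h₁₂) := by
  obtain ⟨y₁, hy₁⟩ := hx₁
  obtain ⟨y₂, hy₂⟩ := hx₂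
  by_cases h12 : W₂ = W₁
  · subst h12
    refine ⟨F.map (le_inf le_rfl le_rfl) y₁, ?_⟩
    rw [F.map_comp]; exact hy₁
  · have hUV : W₁ ⊔ W₂ ≤ V := sup_le h₁ h₂
    have key : F.map (le_sup_left : W₁ ≤ W₁ ⊔ W₂) y₁ = F.map le_sup_right y₂ := by
      apply F.inj hUV
      rw [F.map_comp, F.map_comp]
      exact hy₁.trans hy₂.symm
    obtain ⟨ψ, hψ, -⟩ := F.glue (W₁ ⊔ W₂) {W₁, W₂} sSup_pair _ (pushMap F W₁ W₂)
      (pushMap_compat F W₁ W₂)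
    have e₁ := hψ W₁ (Set.mem_insert _ _) y₁
    have e₂ := hψ W₂ (Set.mem_insert_of_mem _ rfl) y₂
    have p₁ : pushMap F W₁ W₂ W₁ (Set.mem_insert _ _) y₁
        = Quot.mk (pushRel F W₁ W₂) (.inl y₁) := by
      unfold pushMap
      rw [dif_pos rfl]
      exact congrArg (Quot.mk _) (congrArg Sum.inl (F.map_id W₁ y₁))
    have p₂ : pushMap F W₁ W₂ W₂ (Set.mem_insert_of_mem _ rfl) y₂
        = Quot.mk (pushRel F W₁ W₂) (.inr y₂) := by
      unfold pushMap
      rw [dif_neg h12]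
      exact congrArg (Quot.mk _) (congrArg Sum.inr (F.map_id W₂ y₂))
    rw [p₁] at e₁
    rw [p₂] at e₂
    have quoteq : Quot.mk (pushRel F W₁ W₂) (.inl y₁) = Quot.mk (pushRel F W₁ W₂) (.inr y₂) := by
      rw [e₁, e₂]
      exact congrArg ψ key
    have hex : pushPred F W₁ W₂ (Sum.inr y₂) :=
      cast (congrArg (Quot.lift (pushPred F W₁ W₂) (pushPred_resp F W₁ W₂)) quoteq) trivial
    obtain ⟨c, hc⟩ := hex
    refine ⟨c, ?_⟩
    rw [← hy₂, ← hc, F.map_comp]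

end FadedSetCosheaf

/-- For a faded cosheaf of sets `F` over a sober space `B` (T0 and
quasi-sober) and every open `V`, there is a unique map `s_V : F(V) → V` such
that for every open `W ≤ V` and every `x ∈ F(V)`:
`s_V(x) ∈ W ↔ x ∈ Im(R^W_V)`. -/
theorem faded_cosheaf_support_unique {B : Type} [TopologicalSpace B]
    [T0Space B] [QuasiSober B] (F : FadedSetCosheaf B)
    (V : TopologicalSpace.Opens B) :
    ∃! s : F.obj V → V, ∀ (W : TopologicalSpace.Opens B) (h : W ≤ V)
      (x : F.obj V), (s x : B) ∈ W ↔ x ∈ Set.range (F.map h) := by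
  classical
  have hex : ∀ x : F.obj V, ∃ b : B, b ∈ V ∧
      ∀ (W : Opens B) (h : W ≤ V), b ∈ W ↔ x ∈ Set.range (F.map h) := by
    intro x
    set good : Opens B → Prop :=
      fun U => x ∈ Set.range (F.map (inf_le_right : U ⊓ V ≤ V)) with hgood
    have good_mono : ∀ {U U' : Opens B}, U ≤ U' → good U → good U' := by
      intro U U' hUU' hU
      exact F.range_mono (inf_le_inf_right V hUU') _ _ hU
    have good_V : good V :=
      ⟨F.map (le_inf le_rfl le_rfl) x, by rw [F.map_comp]; exact F.map_id V x⟩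
    have good_iff : ∀ (W : Opens B) (h : W ≤ V),
        x ∈ Set.range (F.map h) ↔ good W := by
      intro W h
      constructor
      · exact fun hx => F.range_mono (le_inf le_rfl h) h inf_le_right hx
      · exact fun hx => F.range_mono inf_le_left inf_le_right h hx
    have good_inf : ∀ {U U' : Opens B}, good U → good U' → good (U ⊓ U') := by
      intro U U' hU hU'
      have h3 := F.mem_range_inf inf_le_right inf_le_right hU hU'
        (inf_le_left.trans inf_le_right)
      exact F.range_mono
        (le_inf (le_inf (inf_le_left.trans inf_le_left) (inf_le_right.trans inf_le_left))
          (inf_le_left.trans inf_le_right))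
        _ _ h3
    set Z : Set B := {b | ∀ U : Opens B, b ∈ U → good U} with hZdef
    have hZclosed : IsClosed Z := by
      rw [← isOpen_compl_iff]
      have hc : Zᶜ = ⋃ U ∈ {U : Opens B | ¬ good U}, (U : Set B) := by
        ext b
        simp only [hZdef, Set.mem_compl_iff, Set.mem_setOf_eq, Set.mem_iUnion, SetLike.mem_coe,
          not_forall]
        tauto
      rw [hc]
      exact isOpen_biUnion fun U _ => U.isOpen
    have hmeet : ∀ U : Opens B, (Z ∩ U : Set B).Nonempty ↔ good U := by
      intro U
      constructor
      · rintro ⟨b, hbZ, hbU⟩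
        exact hbZ U hbU
      · intro hU
        by_contra hempty
        rw [Set.not_nonempty_iff_eq_empty] at hempty
        obtain ⟨y, hy⟩ := hU
        have hcov : sSup {W : Opens B | W ≤ U ⊓ V ∧ ¬ good W} = U ⊓ V := by
          apply le_antisymm (sSup_le fun W hW => hW.1)
          intro b hb
          have hbU : b ∈ U := by
            have : b ∈ (U : Set B) ∩ V := by rw [← Opens.coe_inf]; exact hb
            exact this.1
          have hbZ : b ∉ Z := by
            intro hbZ
            exact Set.eq_empty_iff_forall_notMem.mp hempty b ⟨hbZ, hbU⟩
          simp only [hZdef, Set.mem_setOf_eq, not_forall] at hbZ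
          obtain ⟨U', hbU', hU'bad⟩ := hbZ
          refine Opens.mem_sSup.mpr ⟨U' ⊓ (U ⊓ V), ⟨inf_le_right, ?_⟩, ?_⟩
          · exact fun hg => hU'bad (good_mono inf_le_left hg)
          · rw [← SetLike.mem_coe, Opens.coe_inf]
            exact ⟨hbU', hb⟩
        obtain ⟨W, hW, hle, ⟨w, hw⟩⟩ := F.exists_mem_range_of_cover hcov y
        apply hW.2
        refine (good_iff W (hle.trans inf_le_right)).mp ⟨w, ?_⟩
        rw [← hy, ← hw, F.map_comp]
    have hZne : Z.Nonempty := by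
      obtain ⟨b, hb, -⟩ := (hmeet ⊤).mpr (good_mono le_top good_V)
      exact ⟨b, hb⟩
    have hZirr : IsIrreducible Z := by
      refine ⟨hZne, fun u v hu hv hZu hZv => ?_⟩
      have h1 : good ⟨u, hu⟩ := (hmeet ⟨u, hu⟩).mp hZu
      have h2 : good ⟨v, hv⟩ := (hmeet ⟨v, hv⟩).mp hZv
      obtain ⟨b, hbZ, hb⟩ := (hmeet (⟨u, hu⟩ ⊓ ⟨v, hv⟩)).mpr (good_inf h1 h2)
      rw [Opens.coe_inf] at hb
      exact ⟨b, hbZ, hb⟩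
    obtain ⟨η, hη⟩ := QuasiSober.sober hZirr hZclosed
    have hηZ : η ∈ Z := hη.mem
    have hηmem : ∀ U : Opens B, η ∈ U ↔ good U := by
      intro U
      constructor
      · intro h
        exact (hmeet U).mp ⟨η, hηZ, h⟩
      · intro h
        obtain ⟨b, hbZ, hbU⟩ := (hmeet U).mpr h
        have hbc : b ∈ closure ({η} : Set B) := by rw [hη]; exact hbZ
        obtain ⟨c, hcU, hcη⟩ := mem_closure_iff.mp hbc U U.isOpen hbU
        rw [Set.mem_singleton_iff] at hcη
        rwa [← hcη]
    refine ⟨η, (hηmem V).mpr good_V, fun W h => ?_⟩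
    rw [hηmem W]
    exact (good_iff W h).symm
  choose bfun hbV hbW using hex
  refine ⟨fun x => ⟨bfun x, hbV x⟩, fun W h x => hbW x W h, ?_⟩
  intro s' hs'
  funext x
  apply Subtype.ext
  have hsep : Inseparable (s' x : B) (bfun x) := by
    rw [inseparable_iff_forall_isOpen]
    intro u hu
    have e1 := hs' (⟨u, hu⟩ ⊓ V) inf_le_right x
    have e2 := hbW x (⟨u, hu⟩ ⊓ V) inf_le_right
    have m1 : ∀ b : B, b ∈ ((⟨u, hu⟩ : Opens B) ⊓ V) ↔ b ∈ u ∧ b ∈ V := by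
      intro b
      rw [← SetLike.mem_coe, Opens.coe_inf]
      rfl
    constructor
    · intro h
      exact ((m1 _).mp (e2.mpr (e1.mp ((m1 _).mpr ⟨h, (s' x).2⟩)))).1
    · intro h
      exact ((m1 _).mp (e1.mpr (e2.mp ((m1 _).mpr ⟨h, hbV x⟩)))).1
  exact hsep.eq
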